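/- arXiv:0709.1062 — 6 statements merged into one kernel-verified Lean document; each statement's English description precedes it below -/
import Mathlib

section
/- Let $V$ be a topological vector space and $C \subseteq V$ a nonempty closed convex set. Then $\lim(C) = \{v \in V : v = \lim_{n} t_n c_n \text{ for some } c_n \in C,\ t_n \geq 0,\ t_n \to 0\}$, where $\lim(C) = \{v : C + v \subseteq C\}$ is the recession cone. -/
open Filter Topology

/-- Characterization of the recession cone of a nonempty closed convex set `C`:
`v ∈ lim(C)` iff `v = lim tₙ cₙ` for some `cₙ ∈ C`, `tₙ ≥ 0`, `tₙ → 0`. -/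
theorem stmt_1 {V : Type*} [AddCommGroup V] [Module ℝ V] [TopologicalSpace V]
    [IsTopologicalAddGroup V] [ContinuousSMul ℝ V]
    (C : Set V) (hne : C.Nonempty) (hcl : IsClosed C) (hconv : Convex ℝ C) :
    {v : V | ∀ c ∈ C, c + v ∈ C} =
      {v : V | ∃ (c : ℕ → V) (t : ℕ → ℝ), (∀ n, c n ∈ C) ∧ (∀ n, 0 ≤ t n) ∧
        Tendsto t atTop (𝓝 0) ∧ Tendsto (fun n => t n • c n) atTop (𝓝 v)} := by
  ext v
  simp only [Set.mem_setOf_eq]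
  constructor
  · intro hv
    obtain ⟨c₀, hc₀⟩ := hne
    refine ⟨fun n => c₀ + (n : ℝ) • v, fun n => 1 / (n + 1), ?_, ?_, ?_, ?_⟩
    · intro n
      induction n with
      | zero => simpa using hc₀
      | succ k ih =>
          have := hv _ ih
          push_cast
          rw [add_smul, one_smul, ← add_assoc]
          exact this
    · intro n; positivity
    · exact tendsto_one_div_add_atTop_nhds_zero_nat
    · have h1 : Tendsto (fun n : ℕ => (1 / ((n : ℝ) + 1)) • c₀) atTop (𝓝 0) := by
        simpa using (tendsto_one_div_add_atTop_nhds_zero_nat (𝕜 := ℝ)).smul_const c₀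
      have h2 : Tendsto (fun n : ℕ => ((n : ℝ) / ((n : ℝ) + 1)) • v) atTop (𝓝 v) := by
        have : Tendsto (fun n : ℕ => (n : ℝ) / ((n : ℝ) + 1)) atTop (𝓝 1) := by
          have := tendsto_one_div_add_atTop_nhds_zero_nat (𝕜 := ℝ)
          have h := (tendsto_const_nhds (x := (1:ℝ)) (f := atTop)).sub this
          simp only [sub_zero] at h
          refine h.congr fun n => ?_
          field_simp
          ring
        simpa using this.smul_const v
      have := h1.add h2
      simp only [zero_add] at this
      refine this.congr fun n => ?_
      have hn : ((n : ℝ) + 1) ≠ 0 := by positivity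
      match_scalars <;> field_simp
  · rintro ⟨c, t, hc, ht, ht0, hv⟩ x hx
    have hev : ∀ᶠ n in atTop, t n ≤ 1 := by
      filter_upwards [ht0.eventually_lt_const one_pos] with n h using h.le
    have hy : Tendsto (fun n => (1 - t n) • x + t n • c n) atTop (𝓝 (x + v)) := by
      have h1 : Tendsto (fun n => (1 - t n) • x) atTop (𝓝 x) := by
        have : Tendsto (fun n => 1 - t n) atTop (𝓝 1) := by
          simpa using ((tendsto_const_nhds (x := (1:ℝ)) (f := atTop)).sub ht0)
        simpa using this.smul_const x
      exact h1.add hv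
    refine hcl.mem_of_tendsto hy ?_
    filter_upwards [hev] with n hn
    exact hconv hx (hc n) (by linarith [ht n]) (ht n) (by ring)
end

section
/- Let $V$ be a locally convex space and $C \subseteq V'$ a nonempty weak-*-closed convex set. Then the dual cone of $B(C) = \{v \in V : \inf \langle C, v\rangle > -\infty\}$, namely $B(C)^\star = \{\alpha \in V' : \alpha(v) \geq 0 \text{ for all } v \in B(C)\}$, equals the recession cone $\lim(C) = \{\alpha \in V' : C + \alpha \subseteq C\}$. -/
open Filter

/-- Every continuous linear functional on the weak-* dual is evaluation at a point. -/
lemma weakDual_functional_exists_eval {V : Type*} [AddCommGroup V] [Module ℝ V]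
    [TopologicalSpace V] (f : WeakDual ℝ V →L[ℝ] ℝ) :
    ∃ v : V, ∀ β : WeakDual ℝ V, f β = β v := by
  classical
  set B := topDualPairing ℝ V with hB
  have hb : (nhds (0 : WeakDual ℝ V)).HasBasis B.toSeminormFamily.basisSets _root_.id :=
    LinearMap.hasBasis_weakBilin B
  have hmem : f ⁻¹' Metric.ball (0 : ℝ) 1 ∈ nhds (0 : WeakDual ℝ V) := by
    have h0 : f 0 = 0 := map_zero f
    have := f.continuous.continuousAt (x := (0 : WeakDual ℝ V))
    apply this.preimage_mem_nhds
    rw [h0]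
    exact Metric.ball_mem_nhds _ one_pos
  obtain ⟨U, hU, hUsub⟩ := hb.mem_iff.mp hmem
  obtain ⟨s, r, hr, rfl⟩ := B.toSeminormFamily.basisSets_iff.mp hU
  -- evaluation functionals at points of `s`
  let L : s → (WeakDual ℝ V →ₗ[ℝ] ℝ) := fun i =>
    { toFun := fun β => β (i : V)
      map_add' := fun β γ => rfl
      map_smul' := fun c β => rfl }
  have hker : ⨅ i, LinearMap.ker (L i) ≤ LinearMap.ker (f : WeakDual ℝ V →ₗ[ℝ] ℝ) := by
    intro β hβ
    simp only [Submodule.mem_iInf, LinearMap.mem_ker] at hβ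
    have key : ∀ t : ℝ, |f (t • β)| < 1 := by
      intro t
      have hball : t • β ∈ (s.sup B.toSeminormFamily).ball 0 r := by
        refine (Seminorm.mem_ball_zero _).mpr ?_
        apply Seminorm.finset_sup_apply_lt hr
        intro i hi
        have : β (i : V) = 0 := hβ ⟨i, hi⟩
        have : (t • β) (i : V) = 0 := by
          show t • β (i : V) = 0
          rw [this, smul_zero]
        show ‖(t • β) (i : V)‖ < r
        rw [this]
        simpa using hr
      have h := hUsub hball
      simp only [Set.mem_preimage, Metric.mem_ball, Real.dist_eq, sub_zero] at h
      exact h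
    have habs : ∀ t : ℝ, |t| * |f β| < 1 := by
      intro t
      have := key t
      rwa [map_smul, smul_eq_mul, abs_mul] at this
    rw [LinearMap.mem_ker]
    by_contra hfb
    have h2 : |f β| > 0 := abs_pos.mpr hfb
    have := habs (2 / |f β|)
    rw [abs_div, abs_two, abs_abs, div_mul_cancel₀ _ (ne_of_gt h2)] at this
    norm_num at this
  have hspan := mem_span_of_iInf_ker_le_ker hker
  obtain ⟨c, hc⟩ := (Submodule.mem_span_range_iff_exists_fun ℝ).mp hspan
  refine ⟨∑ i : s, c i • (i : V), fun β => ?_⟩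
  have := congrArg (fun g => g β) hc
  simp only [LinearMap.coe_sum, Finset.sum_apply, LinearMap.smul_apply,
    ContinuousLinearMap.coe_coe] at this
  rw [← this]
  rw [map_sum]
  congr 1
  ext i
  rw [map_smul]
  rfl

/-- For a nonempty weak-*-closed convex set `C ⊆ V'`, the dual cone of
`B(C) = {v | inf ⟨C, v⟩ > -∞}` equals the recession cone `lim(C)`. -/
theorem stmt_5 {V : Type*} [AddCommGroup V] [Module ℝ V] [TopologicalSpace V]
    [IsTopologicalAddGroup V] [ContinuousSMul ℝ V] [LocallyConvexSpace ℝ V]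
    (C : Set (WeakDual ℝ V)) (hne : C.Nonempty) (hcl : IsClosed C) (hconv : Convex ℝ C) :
    {α : WeakDual ℝ V |
        ∀ v ∈ {v : V | BddBelow ((fun β : WeakDual ℝ V => β v) '' C)}, 0 ≤ α v} =
      {α : WeakDual ℝ V | ∀ β ∈ C, β + α ∈ C} := by
  ext α
  simp only [Set.mem_setOf_eq]
  constructor
  · -- hard direction: dual cone ⊆ recession cone, via Hahn-Banach separation
    intro hα β hβ
    by_contra hnot
    haveI : LocallyConvexSpace ℝ (WeakDual ℝ V) :=
      WeakBilin.locallyConvexSpace (B := topDualPairing ℝ V)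
    obtain ⟨f, u, hfu, hC⟩ := geometric_hahn_banach_point_closed hconv hcl hnot
    obtain ⟨v, hv⟩ := weakDual_functional_exists_eval f
    have hvB : BddBelow ((fun γ : WeakDual ℝ V => γ v) '' C) := by
      refine ⟨u, ?_⟩
      rintro x ⟨γ, hγ, rfl⟩
      have := hC γ hγ
      rw [hv γ] at this
      exact le_of_lt this
    have hαv : 0 ≤ α v := hα v hvB
    have hβv : u < β v := by have := hC β hβ; rwa [hv β] at this
    have : (β + α) v < u := by rwa [hv (β + α)] at hfu
    have hadd : (β + α) v = β v + α v := rfl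
    linarith
  · -- easy direction: recession cone ⊆ dual cone
    intro hα v hv
    obtain ⟨m, hm⟩ := hv
    obtain ⟨β, hβ⟩ := hne
    have hn : ∀ n : ℕ, β + n • α ∈ C := by
      intro n
      induction n with
      | zero => simpa using hβ
      | succ k ih =>
        have := hα _ ih
        convert this using 1
        rw [add_assoc, succ_nsmul]
    by_contra hneg
    push_neg at hneg
    obtain ⟨n, hnn⟩ := exists_nat_gt ((β v - m) / (-(α v)))
    have hpos : 0 < -(α v) := by linarith
    have h1 : (β v - m) < n * (-(α v)) := by
      rw [div_lt_iff₀ hpos] at hnn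
      linarith
    have h2 : m ≤ (β + n • α) v := hm ⟨_, hn n, rfl⟩
    have h3 : (β + n • α) v = β v + n * α v := by
      have : (β + n • α) v = β v + (n • α) v := rfl
      rw [this]
      congr 1
      show ((n : ℕ) • α) v = n * α v
      rw [← Nat.cast_smul_eq_nsmul ℝ]
      rfl
    rw [h3] at h2
    linarith
end

section
/- Let $V$ be a barrelled locally convex space, $\Omega \subseteq V$ an open convex set, and $f : \Omega \to \mathbb{R}$ a lower semicontinuous convex function. Then $f$ is continuous. -/
open Set Filter Topology

/-- On a barrelled locally convex space, every lower semicontinuous convex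
function on an open convex set is continuous. -/
theorem stmt_10 {V : Type*} [AddCommGroup V] [Module ℝ V] [TopologicalSpace V]
    [IsTopologicalAddGroup V] [ContinuousSMul ℝ V] [LocallyConvexSpace ℝ V]
    [BarrelledSpace ℝ V]
    (Ω : Set V) (hΩ : IsOpen Ω) (hΩconv : Convex ℝ Ω)
    (f : V → ℝ) (hconv : ConvexOn ℝ Ω f) (hlsc : LowerSemicontinuousOn f Ω) :
    ContinuousOn f Ω := by
  intro x₀ hx₀
  suffices h : ContinuousAt f x₀ from h.continuousWithinAt
  -- a useful affine combination identity
  have combo : ∀ (a b : ℝ), a + b = 1 → ∀ u u' : V,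
      x₀ + (a • u + b • u') = a • (x₀ + u) + b • (x₀ + u') := by
    intro a b hab u u'
    have h : a • (x₀ + u) + b • (x₀ + u') = (a + b) • x₀ + (a • u + b • u') := by module
    rw [h, hab, one_smul]
  -- the basic set A
  set A : Set V := {v | x₀ + v ∈ Ω ∧ x₀ + (-v) ∈ Ω ∧
      f (x₀ + v) ≤ f x₀ + 1 ∧ f (x₀ + (-v)) ≤ f x₀ + 1} with hAdef
  have hA0 : (0 : V) ∈ A := by
    refine ⟨by simpa using hx₀, by simpa using hx₀, ?_, ?_⟩ <;>
      simp only [neg_zero, add_zero] <;> linarith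
  have hAconv : Convex ℝ A := by
    rintro v ⟨hv1, hv2, hv3, hv4⟩ w ⟨hw1, hw2, hw3, hw4⟩ a b ha hb hab
    have e1 : x₀ + (a • v + b • w) = a • (x₀ + v) + b • (x₀ + w) := combo a b hab v w
    have e2 : x₀ + (-(a • v + b • w)) = a • (x₀ + (-v)) + b • (x₀ + (-w)) := by
      have h := combo a b hab (-v) (-w)
      rwa [show a • (-v) + b • (-w) = -(a • v + b • w) by module] at h
    have hsum : a * (f x₀ + 1) + b * (f x₀ + 1) = f x₀ + 1 := by
      rw [← add_mul, hab, one_mul]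
    refine ⟨?_, ?_, ?_, ?_⟩
    · rw [e1]; exact hΩconv hv1 hw1 ha hb hab
    · rw [e2]; exact hΩconv hv2 hw2 ha hb hab
    · rw [e1]
      have h := hconv.2 hv1 hw1 ha hb hab
      simp only [smul_eq_mul] at h
      have h1 := mul_le_mul_of_nonneg_left hv3 ha
      have h2 := mul_le_mul_of_nonneg_left hw3 hb
      linarith
    · rw [e2]
      have h := hconv.2 hv2 hw2 ha hb hab
      simp only [smul_eq_mul] at h
      have h1 := mul_le_mul_of_nonneg_left hv4 ha
      have h2 := mul_le_mul_of_nonneg_left hw4 hb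
      linarith
  have hAsymm : ∀ v ∈ A, -v ∈ A := by
    rintro v ⟨hv1, hv2, hv3, hv4⟩
    exact ⟨hv2, by rwa [neg_neg], hv4, by rwa [neg_neg]⟩
  have hAbal : Balanced ℝ A := by
    intro a ha
    rintro _ ⟨v, hv, rfl⟩
    have ha' : |a| ≤ 1 := by rwa [Real.norm_eq_abs] at ha
    obtain ⟨ha1, ha2⟩ := abs_le.1 ha'
    have h1 : (0:ℝ) ≤ (1 + a) / 2 := by linarith
    have h2 : (0:ℝ) ≤ (1 - a) / 2 := by linarith
    have h3 : (1 + a) / 2 + (1 - a) / 2 = 1 := by ring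
    have hmem := hAconv hv (hAsymm v hv) h1 h2 h3
    have e : ((1 + a) / 2) • v + ((1 - a) / 2) • (-v) = a • v := by module
    rwa [e] at hmem
  have hAabs : Absorbent ℝ A := by
    rw [absorbent_iff_eventually_nhdsNE_zero]
    intro v
    -- find ε > 0 with ε • v ∈ A
    have hcont : Continuous (fun t : ℝ => x₀ + t • v) := by continuity
    have hopen : IsOpen ((fun t : ℝ => x₀ + t • v) ⁻¹' Ω) := hΩ.preimage hcont
    have h0 : (0:ℝ) ∈ (fun t : ℝ => x₀ + t • v) ⁻¹' Ω := by
      simp only [mem_preimage, zero_smul, add_zero]; exact hx₀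
    obtain ⟨δ, hδ, hball⟩ := Metric.isOpen_iff.1 hopen 0 h0
    set d : ℝ := δ / 2 with hd
    have hdpos : 0 < d := by positivity
    have hdmem : ∀ t : ℝ, |t| ≤ d → x₀ + t • v ∈ Ω := by
      intro t ht
      apply hball
      simp only [Metric.mem_ball, Real.dist_eq, sub_zero]
      calc |t| ≤ d := ht
        _ < δ := by rw [hd]; linarith
    set M : ℝ := max (f (x₀ + d • v) - f x₀) (max (f (x₀ + (-d) • v) - f x₀) 1) with hM
    have hM1 : (1:ℝ) ≤ M := le_max_of_le_right (le_max_right _ _)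
    have hMpos : 0 < M := lt_of_lt_of_le one_pos hM1
    set ε : ℝ := d / M with hε
    have hεpos : 0 < ε := by positivity
    have hεd : ε ≤ d := div_le_self hdpos.le hM1
    have hdΩ : x₀ + d • v ∈ Ω := hdmem d (by rw [abs_of_nonneg hdpos.le])
    have hdΩ' : x₀ + (-d) • v ∈ Ω := hdmem (-d) (by rw [abs_neg, abs_of_nonneg hdpos.le])
    have hcoef1 : (0:ℝ) ≤ 1 - M⁻¹ := by
      have : M⁻¹ ≤ 1 := inv_le_one_of_one_le₀ hM1
      linarith
    have hcoef2 : (0:ℝ) ≤ M⁻¹ := by positivity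
    have hcoef3 : (1 - M⁻¹) + M⁻¹ = 1 := by ring
    have hMM : M⁻¹ * M = 1 := inv_mul_cancel₀ hMpos.ne'
    have hεv : ε • v ∈ A := by
      have hεabs : |ε| ≤ d := by rw [abs_of_nonneg hεpos.le]; exact hεd
      have hid : x₀ + ε • v = (1 - M⁻¹) • x₀ + M⁻¹ • (x₀ + d • v) := by
        have h := combo (1 - M⁻¹) M⁻¹ hcoef3 0 (d • v)
        rw [smul_zero, zero_add, add_zero, smul_smul] at h
        rw [show ε • v = (M⁻¹ * d) • v from by rw [hε]; congr 1; ring]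
        exact h
      have hid' : x₀ + (-(ε • v)) = (1 - M⁻¹) • x₀ + M⁻¹ • (x₀ + (-d) • v) := by
        have h := combo (1 - M⁻¹) M⁻¹ hcoef3 0 ((-d) • v)
        rw [smul_zero, zero_add, add_zero, smul_smul] at h
        rw [show -(ε • v) = (M⁻¹ * -d) • v from by
          rw [← neg_smul]; congr 1; rw [hε]; ring]
        exact h
      have hf1 := hconv.2 hx₀ hdΩ hcoef1 hcoef2 hcoef3
      rw [← hid] at hf1
      simp only [smul_eq_mul] at hf1
      have hf2 := hconv.2 hx₀ hdΩ' hcoef1 hcoef2 hcoef3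
      rw [← hid'] at hf2
      simp only [smul_eq_mul] at hf2
      have hfd : f (x₀ + d • v) - f x₀ ≤ M := le_max_left _ _
      have hfd' : f (x₀ + (-d) • v) - f x₀ ≤ M := le_max_of_le_right (le_max_left _ _)
      have step : M⁻¹ * (f (x₀ + d • v) - f x₀) ≤ 1 :=
        (mul_le_mul_of_nonneg_left hfd hcoef2).trans_eq hMM
      have step' : M⁻¹ * (f (x₀ + (-d) • v) - f x₀) ≤ 1 :=
        (mul_le_mul_of_nonneg_left hfd' hcoef2).trans_eq hMM
      refine ⟨hdmem ε hεabs, ?_, by nlinarith, by nlinarith⟩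
      rw [← neg_smul]
      exact hdmem (-ε) (by rwa [abs_neg])
    have hbal : ∀ c : ℝ, |c| ≤ ε → c • v ∈ A := by
      intro c hc
      have h1 : ‖c / ε‖ ≤ 1 := by
        rw [Real.norm_eq_abs, abs_div, abs_of_nonneg hεpos.le]
        exact div_le_one_of_le₀ hc hεpos.le
      have h2 := hAbal (c / ε) h1 ⟨ε • v, hεv, rfl⟩
      have hce : (c / ε) • (ε • v) = c • v := by
        rw [smul_smul]; congr 1; field_simp
      have h2' : (c / ε) • (ε • v) ∈ A := h2
      rwa [hce] at h2'
    have hev : ∀ᶠ c : ℝ in 𝓝 (0:ℝ), |c| ≤ ε := by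
      filter_upwards [eventually_abs_sub_lt (0:ℝ) hεpos] with c hc
      rw [sub_zero] at hc; exact hc.le
    exact (hev.filter_mono nhdsWithin_le_nhds).mono hbal
  -- the barrel C
  set C : Set V := closure A with hCdef
  have hC_closed : IsClosed C := isClosed_closure
  have hCconv : Convex ℝ C := hAconv.closure
  have hCbal : Balanced ℝ C := hAbal.closure
  have hCabs : Absorbent ℝ C := hAabs.mono subset_closure
  have hC0 : (0 : V) ∈ C := subset_closure hA0
  have hCsymm : ∀ x ∈ C, -x ∈ C := by
    intro x hx
    have h := hCbal (-1) (by norm_num) ⟨x, hx, rfl⟩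
    simpa using h
  -- the gauge of C is a lower semicontinuous seminorm
  have hlscg : LowerSemicontinuous (gauge C) := by
    rw [lowerSemicontinuous_iff_isClosed_preimage]
    intro a
    rcases le_or_gt 0 a with ha | ha
    · rw [show gauge C ⁻¹' Iic a = {x : V | gauge C x ≤ a} from rfl,
        gauge_le_eq hCconv hC0 hCabs ha]
      exact isClosed_iInter fun r => isClosed_iInter fun hr =>
        hC_closed.smul_of_ne_zero (ha.trans_lt hr).ne'
    · have he : gauge C ⁻¹' Iic a = ∅ := by
        rw [eq_empty_iff_forall_notMem]
        intro x hx
        exact absurd ((gauge_nonneg x).trans hx) (not_le.2 ha)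
      rw [he]; exact isClosed_empty
  -- by barrelledness, the gauge is continuous
  have hgcont : Continuous (gauge C) :=
    Seminorm.continuous_of_lowerSemicontinuous (gaugeSeminorm hCbal hCconv hCabs) hlscg
  -- key step: small gauge implies membership in Ω and the f-bound, via lsc
  have hUopen : IsOpen {u : V | x₀ + u ∈ Ω} :=
    hΩ.preimage (continuous_const.add continuous_id)
  have hUconv : Convex ℝ {u : V | x₀ + u ∈ Ω} := by
    intro u hu u' hu' a b ha hb hab
    show x₀ + (a • u + b • u') ∈ Ω
    rw [combo a b hab]
    exact hΩconv hu hu' ha hb hab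
  have key : ∀ v : V, gauge C v < 1 / 2 → x₀ + v ∈ Ω ∧ f (x₀ + v) ≤ f x₀ + 1 := by
    intro v hv
    have h2v : (2 : ℝ) • v ∈ C := by
      apply gauge_lt_one_subset_self hCconv hC0 hCabs
      show gauge C ((2:ℝ) • v) < 1
      rw [gauge_smul hCbal, Real.norm_eq_abs, abs_of_pos (by norm_num : (0:ℝ) < 2)]
      linarith
    have hxv : x₀ + v ∈ Ω := by
      have h0int : (0 : V) ∈ interior {u : V | x₀ + u ∈ Ω} := by
        rw [hUopen.interior_eq]
        show x₀ + 0 ∈ Ω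
        simpa using hx₀
      have hcl : (2:ℝ) • v ∈ closure {u : V | x₀ + u ∈ Ω} :=
        closure_mono (fun u hu => hu.1) h2v
      have hmem := hUconv.combo_interior_closure_mem_interior h0int hcl
        one_half_pos (by norm_num : (0:ℝ) ≤ 1/2) (by norm_num : (1/2:ℝ) + 1/2 = 1)
      rw [smul_zero, zero_add, smul_smul] at hmem
      norm_num at hmem
      have hv2 : v ∈ {u : V | x₀ + u ∈ Ω} := interior_subset hmem
      exact hv2
    refine ⟨hxv, ?_⟩
    by_contra hgt
    push_neg at hgt
    have hl := hlsc (x₀ + v) hxv (f x₀ + 1/2) (by linarith)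
    rw [hΩ.nhdsWithin_eq hxv] at hl
    have hφ : Continuous (fun u : V => x₀ + (1/2 : ℝ) • u) :=
      continuous_const.add (continuous_id.const_smul _)
    have hmem : x₀ + v ∈ closure ((fun u : V => x₀ + (1/2 : ℝ) • u) '' A) := by
      apply image_closure_subset_closure_image hφ (s := A)
      refine ⟨(2:ℝ) • v, h2v, ?_⟩
      show x₀ + (1/2 : ℝ) • ((2:ℝ) • v) = x₀ + v
      rw [smul_smul]; norm_num
    have hlset : {y : V | f x₀ + 1/2 < f y} ∈ 𝓝 (x₀ + v) := hl
    obtain ⟨y, hyT, hyim⟩ := mem_closure_iff_nhds.1 hmem _ hlset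
    obtain ⟨u, huA, rfl⟩ := hyim
    have hconvu := hconv.2 hx₀ huA.1 (by norm_num : (0:ℝ) ≤ 1/2)
      (by norm_num : (0:ℝ) ≤ 1/2) (by norm_num : (1/2:ℝ) + 1/2 = 1)
    simp only [smul_eq_mul] at hconvu
    have hidm : (1/2 : ℝ) • x₀ + (1/2 : ℝ) • (x₀ + u) = x₀ + (1/2 : ℝ) • u := by module
    rw [hidm] at hconvu
    have hfu := huA.2.2.1
    have hyT' : f x₀ + 1/2 < f (x₀ + (1/2:ℝ) • u) := hyT
    linarith
  -- quantitative bound near x₀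
  have upper : ∀ t : ℝ, 0 < t → t ≤ 1 → ∀ v : V, gauge C v < t / 2 →
      x₀ + v ∈ Ω ∧ f (x₀ + v) ≤ f x₀ + t := by
    intro t ht ht1 v hv
    have hv' : gauge C v < 1 / 2 := hv.trans_le (by linarith)
    have hxv : x₀ + v ∈ Ω := (key v hv').1
    have hw : gauge C (t⁻¹ • v) < 1 / 2 := by
      rw [gauge_smul hCbal, Real.norm_eq_abs, abs_of_pos (inv_pos.2 ht)]
      calc t⁻¹ * gauge C v < t⁻¹ * (t / 2) := by
            exact mul_lt_mul_of_pos_left hv (inv_pos.2 ht)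
        _ = 1 / 2 := by field_simp
    obtain ⟨hwΩ, hwf⟩ := key _ hw
    have hco : x₀ + v = (1 - t) • x₀ + t • (x₀ + t⁻¹ • v) := by
      have h := combo (1 - t) t (by ring) 0 (t⁻¹ • v)
      rw [smul_zero, zero_add, add_zero, smul_smul, mul_inv_cancel₀ ht.ne', one_smul] at h
      exact h
    have hf := hconv.2 hx₀ hwΩ (show (0:ℝ) ≤ 1 - t by linarith) ht.le (by ring)
    rw [← hco] at hf
    simp only [smul_eq_mul] at hf
    have hprod : t * f (x₀ + t⁻¹ • v) ≤ t * (f x₀ + 1) :=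
      mul_le_mul_of_nonneg_left hwf ht.le
    refine ⟨hxv, by nlinarith⟩
  -- conclude continuity at x₀
  rw [ContinuousAt, Metric.tendsto_nhds]
  intro ε hε
  set t : ℝ := min (ε / 2) 1 with htdef
  have ht : 0 < t := lt_min (by linarith) one_pos
  have ht1 : t ≤ 1 := min_le_right _ _
  have htε : t < ε := lt_of_le_of_lt (min_le_left _ _) (by linarith)
  have hgc : ContinuousAt (fun x : V => gauge C (x - x₀)) x₀ :=
    (hgcont.comp (continuous_id.sub continuous_const)).continuousAt
  have hgc0 : Filter.Tendsto (fun x : V => gauge C (x - x₀)) (𝓝 x₀) (𝓝 0) := by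
    have h : Filter.Tendsto (fun x : V => gauge C (x - x₀)) (𝓝 x₀)
        (𝓝 (gauge C (x₀ - x₀))) := hgc
    rwa [sub_self, gauge_zero] at h
  have hev : ∀ᶠ x in 𝓝 x₀, gauge C (x - x₀) < t / 2 :=
    hgc0.eventually_lt_const (by positivity)
  filter_upwards [hev] with x hx
  have h1 := upper t ht ht1 (x - x₀) hx
  have hg_neg : gauge C (-(x - x₀)) = gauge C (x - x₀) := gauge_neg hCsymm _
  have h2 := upper t ht ht1 (-(x - x₀)) (by rw [hg_neg]; exact hx)
  have e1 : x₀ + (x - x₀) = x := by abel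
  have hfx : f (x₀ + (x - x₀)) = f x := by rw [e1]
  have hmid := hconv.2 h1.1 h2.1 (by norm_num : (0:ℝ) ≤ 1/2)
    (by norm_num : (0:ℝ) ≤ 1/2) (by norm_num : (1/2:ℝ) + 1/2 = 1)
  simp only [smul_eq_mul] at hmid
  have e2 : (1/2 : ℝ) • (x₀ + (x - x₀)) + (1/2 : ℝ) • (x₀ + -(x - x₀)) = x₀ := by module
  rw [e2] at hmid
  rw [Real.dist_eq, abs_sub_lt_iff]
  constructor <;> linarith [h1.2, h2.2, hmid, hfx, htε]
end

section
/- Let $V$ be a locally convex space, $C \subseteq V'$ a nonempty weak-*-closed convex set, and $x \in B(C)$ a point such that the support function $s_C(v) = -\inf\langle C, v\rangle$ is bounded on some neighborhood of $x$. Then for every $m \in \mathbb{R}$ the set $C_m = \{\alpha \in C : \alpha(x) \leq m\}$ is equicontinuous and weak-*-compact. -/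
open scoped Pointwise

/-- If the support function `s_C(v) = -inf ⟨C, v⟩` of a nonempty weak-*-closed
convex set `C ⊆ V'` is bounded on a neighborhood of `x ∈ B(C)`, then every
sublevel set `C_m = {α ∈ C | α x ≤ m}` is equicontinuous and weak-*-compact. -/
theorem stmt_11 {V : Type*} [AddCommGroup V] [Module ℝ V] [TopologicalSpace V]
    [IsTopologicalAddGroup V] [ContinuousSMul ℝ V] [LocallyConvexSpace ℝ V]
    (C : Set (WeakDual ℝ V)) (hne : C.Nonempty) (hcl : IsClosed C) (hconv : Convex ℝ C)
    (x : V) (hx : BddBelow ((fun β : WeakDual ℝ V => β x) '' C))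
    (hbdd : ∃ U ∈ nhds x, ∃ M : ℝ, ∀ v ∈ U, ∀ α ∈ C, -M ≤ α v) :
    ∀ m : ℝ,
      (∃ U ∈ nhds (0 : V), ∀ α ∈ {α ∈ C | α x ≤ m}, ∀ u ∈ U, |α u| ≤ 1) ∧
      IsCompact {α ∈ C | α x ≤ m} := by
  obtain ⟨U, hU, M, hM⟩ := hbdd
  intro m
  set S : Set (WeakDual ℝ V) := {α ∈ C | α x ≤ m} with hSdef
  rcases S.eq_empty_or_nonempty with hSe | ⟨α₀, hα₀⟩
  · refine ⟨⟨Set.univ, Filter.univ_mem, ?_⟩, ?_⟩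
    · intro α hα; rw [hSe] at hα; exact absurd hα (Set.notMem_empty α)
    · rw [hSe]; exact isCompact_empty
  have hxU : x ∈ U := mem_of_mem_nhds hU
  have hMm : -M ≤ m := le_trans (hM x hxU α₀ hα₀.1) hα₀.2
  set c : ℝ := (M + m) + 1 with hc
  have hc0 : 0 < c := by simp only [hc]; linarith
  set W : Set V := {u | x + c • u ∈ U ∧ x - c • u ∈ U} with hWdef
  have hW : W ∈ nhds (0 : V) := by
    have h1 : Continuous fun u : V => x + c • u := continuous_const.add (continuous_id.const_smul c)
    have h2 : Continuous fun u : V => x - c • u := continuous_const.sub (continuous_id.const_smul c)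
    have e1 : (fun u : V => x + c • u) ⁻¹' U ∈ nhds (0 : V) :=
      h1.continuousAt.preimage_mem_nhds (by simpa using hU)
    have e2 : (fun u : V => x - c • u) ⁻¹' U ∈ nhds (0 : V) :=
      h2.continuousAt.preimage_mem_nhds (by simpa using hU)
    exact Filter.inter_mem e1 e2
  -- equicontinuity bound
  have hWb : ∀ α ∈ S, ∀ u ∈ W, |α u| ≤ 1 := by
    intro α hα u hu
    have h1 := hM _ hu.1 α hα.1
    have h2 := hM _ hu.2 α hα.1
    have e1 : α (x + c • u) = α x + c * α u := by
      rw [map_add, map_smul]; rfl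
    have e2 : α (x - c • u) = α x - c * α u := by
      rw [map_sub, map_smul]; rfl
    rw [e1] at h1; rw [e2] at h2
    have hx' : α x ≤ m := hα.2
    rw [abs_le]
    constructor <;> nlinarith
  refine ⟨⟨W, hW, hWb⟩, ?_⟩
  -- compactness
  have hSclosed : IsClosed S := by
    have : S = C ∩ {α : WeakDual ℝ V | α x ≤ m} := rfl
    rw [this]
    exact hcl.inter (isClosed_le (WeakDual.eval_continuous x) continuous_const)
  have hemb : Topology.IsEmbedding (fun (α : WeakDual ℝ V) (v : V) => α v) :=
    WeakBilin.isEmbedding ContinuousLinearMap.coe_injective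
  set e : WeakDual ℝ V → (V → ℝ) := fun α v => α v with hedef
  -- pointwise bounds from absorbency
  have habs : ∀ v : V, ∃ t : ℝ, ∀ α ∈ S, |α v| ≤ t := by
    intro v
    obtain ⟨r, hr0, hrc⟩ := ((absorbent_nhds_zero (𝕜 := ℝ) hW) v).exists_pos
    set c' : ℝ := max r 1 with hc'
    have hc'0 : 0 < c' := lt_of_lt_of_le one_pos (le_max_right r 1)
    have hnorm : r ≤ ‖c'‖ := by
      rw [Real.norm_eq_abs, abs_of_pos hc'0]; exact le_max_left r 1
    have hv : v ∈ c' • W := hrc c' hnorm rfl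
    obtain ⟨u, huW, rfl⟩ := hv
    refine ⟨c', fun α hα => ?_⟩
    have : α (c' • u) = c' * α u := by rw [map_smul]; rfl
    rw [this, abs_mul, abs_of_pos hc'0]
    calc c' * |α u| ≤ c' * 1 := by
          exact mul_le_mul_of_nonneg_left (hWb α hα u huW) (le_of_lt hc'0)
      _ = c' := mul_one c'
  choose t ht using habs
  set K : Set (V → ℝ) := Set.pi Set.univ fun v => Set.Icc (-(t v)) (t v) with hKdef
  have hKc : IsCompact K := isCompact_univ_pi fun v => isCompact_Icc
  have hKcl : IsClosed K := isClosed_set_pi fun v _ => isClosed_Icc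
  have himg : e '' S ⊆ K := by
    rintro f ⟨α, hα, rfl⟩ v -
    have := abs_le.mp (ht v α hα)
    exact ⟨this.1, this.2⟩
  -- the closure of the image is contained in the image
  have hTS : closure (e '' S) ⊆ e '' S := by
    intro f hf
    have hadd : ∀ a b : V, f (a + b) = f a + f b := by
      intro a b
      have hcl' : IsClosed {g : V → ℝ | g (a + b) = g a + g b} :=
        isClosed_eq (continuous_apply _) ((continuous_apply a).add (continuous_apply b))
      refine closure_minimal ?_ hcl' hf
      rintro _ ⟨α, hα, rfl⟩
      simp [hedef, map_add]
    have hsmul : ∀ (r : ℝ) (a : V), f (r • a) = r * f a := by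
      intro r a
      have hcl' : IsClosed {g : V → ℝ | g (r • a) = r * g a} :=
        isClosed_eq (continuous_apply _) (continuous_const.mul (continuous_apply a))
      refine closure_minimal ?_ hcl' hf
      rintro _ ⟨α, hα, rfl⟩
      simp [hedef, map_smul]
    have hfW : ∀ u ∈ W, |f u| ≤ 1 := by
      intro u hu
      have hcl' : IsClosed {g : V → ℝ | |g u| ≤ 1} :=
        isClosed_le (continuous_apply u).abs continuous_const
      refine closure_minimal ?_ hcl' hf
      rintro _ ⟨α, hα, rfl⟩
      exact hWb α hα u hu
    set f' : V →ₗ[ℝ] ℝ :=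
      { toFun := f, map_add' := hadd, map_smul' := by intro r a; simpa using hsmul r a }
      with hf'def
    have hfc : Continuous f := by
      have hat : ContinuousAt f' 0 := by
        have h0 : f' (0 : V) = 0 := map_zero f'
        rw [ContinuousAt, h0, Metric.tendsto_nhds]
        intro ε hε
        have hW2 : (ε / 2) • W ∈ nhds (0 : V) :=
          (set_smul_mem_nhds_zero_iff (by positivity : (ε / 2 : ℝ) ≠ 0)).mpr hW
        filter_upwards [hW2] with y hy
        obtain ⟨u, huW, rfl⟩ := hy
        have h1 : f ((ε / 2) • u) = (ε / 2) * f u := hsmul _ _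
        have h2 : |f u| ≤ 1 := hfW u huW
        show dist (f' ((ε / 2) • u)) 0 < ε
        have : f' ((ε / 2) • u) = f ((ε / 2) • u) := rfl
        rw [this, Real.dist_eq, sub_zero, h1, abs_mul, abs_of_pos (by positivity : (0:ℝ) < ε / 2)]
        nlinarith [abs_nonneg (f u)]
      exact continuous_of_continuousAt_zero f' hat
    set A : WeakDual ℝ V := { toLinearMap := f', cont := hfc } with hAdef
    have heA : e A = f := rfl
    have hAcl : A ∈ closure S := by
      have := hemb.isInducing.closure_eq_preimage_closure_image S
      rw [this]
      exact hf
    exact ⟨A, hSclosed.closure_eq ▸ hAcl, heA⟩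
  have hclosedImg : IsClosed (e '' S) := isClosed_of_closure_subset hTS
  have hcomp : IsCompact (e '' S) := hKc.of_isClosed_subset hclosedImg himg
  exact hemb.isCompact_iff.mpr hcomp
end

section
/- Let $V$ be a locally convex space, $C \subseteq V'$ a nonempty weak-*-closed convex set, and suppose there is $x \in V$ such that the support function $s_C$ is bounded on a neighborhood of $x$. Then $C$ is locally compact in the weak-* topology, and there exists an extreme point $\alpha$ of $C$ with $\alpha(x) = \min\{\beta(x) : \beta \in C\}$. -/
open Set Topology Filter Pointwise

/-- General Banach–Alaoglu: the set of weak-* functionals uniformly bounded on a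
neighborhood of the origin is weak-*-compact. -/
lemma alaoglu_general {V : Type*} [AddCommGroup V] [Module ℝ V] [TopologicalSpace V]
    [IsTopologicalAddGroup V] [ContinuousSMul ℝ V]
    {W : Set V} (hW : W ∈ nhds (0 : V)) (R : ℝ) :
    IsCompact {α : WeakDual ℝ V | ∀ w ∈ W, |α w| ≤ R} := by
  set S : Set (WeakDual ℝ V) := {α : WeakDual ℝ V | ∀ w ∈ W, |α w| ≤ R} with hS
  -- pointwise bounds
  have key : ∀ v : V, ∃ B : ℝ, ∀ α ∈ S, |α v| ≤ B := by
    intro v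
    have habs : Absorbent ℝ W := absorbent_nhds_zero hW
    have hev : ∀ᶠ c : ℝ in 𝓝[≠] 0, c • v ∈ W :=
      absorbent_iff_eventually_nhdsNE_zero.mp habs v
    obtain ⟨c, hcW, hc0⟩ := (hev.and eventually_mem_nhdsWithin).exists
    refine ⟨R / |c|, fun α hα => ?_⟩
    have h1 : |α (c • v)| ≤ R := hα _ hcW
    have h2 : α (c • v) = c * α v := by simp
    rw [h2, abs_mul] at h1
    have hc0' : (0:ℝ) < |c| := abs_pos.mpr hc0
    rw [le_div_iff₀ hc0']
    linarith [h1, abs_nonneg (α v)]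
  choose B hB using key
  -- the image of S under the coercion to functions
  set T : Set (V → ℝ) := (fun α : WeakDual ℝ V => (α : V → ℝ)) '' S with hT
  have hTsub : T ⊆ Set.pi Set.univ fun v => Icc (-(B v)) (B v) := by
    rintro f ⟨α, hα, rfl⟩ v _
    exact abs_le.mp (hB v α hα)
  have hTeq : T = {f : V → ℝ | (∀ u v, f (u + v) = f u + f v) ∧
      (∀ (c : ℝ) v, f (c • v) = c * f v) ∧ ∀ w ∈ W, |f w| ≤ R} := by
    apply Set.Subset.antisymm
    · rintro f ⟨α, hα, rfl⟩
      exact ⟨fun u v => map_add α u v, fun c v => by simp, hα⟩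
    · rintro f ⟨h1, h2, h3⟩
      have hf0 : f 0 = 0 := by
        have := h2 0 0
        simpa using this
      -- continuity at zero
      have hcont0 : Filter.Tendsto f (nhds (0 : V)) (nhds (0 : ℝ)) := by
        rw [NormedAddCommGroup.tendsto_nhds_zero]
        intro ε hε
        set t : ℝ := ε / (|R| + 1) with ht
        have ht0 : 0 < t := by positivity
        have htW : t • W ∈ nhds (0 : V) :=
          (set_smul_mem_nhds_zero_iff ht0.ne').mpr hW
        filter_upwards [htW] with v hv
        obtain ⟨w, hw, rfl⟩ := hv
        have : f (t • w) = t * f w := h2 t w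
        rw [this]
        have hfw : |f w| ≤ |R| := le_trans (h3 w hw) (le_abs_self R)
        have : ‖t * f w‖ = t * |f w| := by
          rw [Real.norm_eq_abs, abs_mul, abs_of_pos ht0]
        rw [this]
        calc t * |f w| ≤ t * |R| := by nlinarith
          _ < t * (|R| + 1) := by nlinarith
          _ = ε := by rw [ht]; field_simp
      have hcont : Continuous f := by
        have : Continuous (AddMonoidHom.mk' f h1) :=
          continuous_of_continuousAt_zero (AddMonoidHom.mk' f h1)
            (by simpa [ContinuousAt, hf0] using hcont0)
        exact this
      refine ⟨(⟨⟨⟨f, h1⟩, fun c v => by simpa using h2 c v⟩, hcont⟩ :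
        WeakDual ℝ V), h3, rfl⟩
  have hTclosed : IsClosed T := by
    rw [hTeq, setOf_and, setOf_and]
    have c1 : IsClosed {f : V → ℝ | ∀ u v, f (u + v) = f u + f v} := by
      simp only [setOf_forall]
      exact isClosed_iInter fun u => isClosed_iInter fun v =>
        isClosed_eq (continuous_apply _) ((continuous_apply u).add (continuous_apply v))
    have c2 : IsClosed {f : V → ℝ | ∀ (c : ℝ) v, f (c • v) = c * f v} := by
      simp only [setOf_forall]
      exact isClosed_iInter fun c => isClosed_iInter fun v =>
        isClosed_eq (continuous_apply _) (continuous_const.mul (continuous_apply v))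
    have c3 : IsClosed {f : V → ℝ | ∀ w ∈ W, |f w| ≤ R} := by
      have : {f : V → ℝ | ∀ w ∈ W, |f w| ≤ R} = ⋂ w ∈ W, {f : V → ℝ | |f w| ≤ R} := by
        ext f; simp
      rw [this]
      exact isClosed_biInter fun w _ => isClosed_le (continuous_apply w).abs continuous_const
    exact c1.inter (c2.inter c3)
  have hTcpt : IsCompact T :=
    (isCompact_univ_pi fun v => isCompact_Icc).of_isClosed_subset hTclosed hTsub
  exact DFunLike.coe_injective.isEmbedding_induced.isCompact_iff.mpr hTcpt

/-- If the support function of a nonempty weak-*-closed convex set `C ⊆ V'` is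
bounded on a neighborhood of some `x`, then `C` is weak-*-locally compact and
the function `α ↦ α(x)` attains its minimum on `C` at an extreme point. -/
theorem stmt_12 {V : Type*} [AddCommGroup V] [Module ℝ V] [TopologicalSpace V]
    [IsTopologicalAddGroup V] [ContinuousSMul ℝ V] [LocallyConvexSpace ℝ V]
    (C : Set (WeakDual ℝ V)) (hne : C.Nonempty) (hcl : IsClosed C) (hconv : Convex ℝ C)
    (x : V)
    (hbdd : ∃ U ∈ nhds x, ∃ M : ℝ, ∀ v ∈ U, ∀ α ∈ C, -M ≤ α v) :
    LocallyCompactSpace C ∧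
    ∃ α ∈ Set.extremePoints ℝ C, ∀ β ∈ C, α x ≤ β x := by
  obtain ⟨U, hU, M, hM⟩ := hbdd
  -- a symmetric neighborhood of 0 out of `U - x`
  set W : Set V := {w | x + w ∈ U ∧ x + -w ∈ U} with hWdef
  have hW : W ∈ nhds (0 : V) := by
    have h1 : (fun w : V => x + w) ⁻¹' U ∈ nhds (0 : V) := by
      apply (continuous_const.add continuous_id).continuousAt.preimage_mem_nhds
      simpa using hU
    have h2 : (fun w : V => x + -w) ⁻¹' U ∈ nhds (0 : V) := by
      apply (continuous_const.add continuous_neg).continuousAt.preimage_mem_nhds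
      simpa using hU
    exact Filter.inter_mem h1 h2
  -- sublevel sets of the evaluation at `x` are weak-*-compact
  have hsub : ∀ m : ℝ, IsCompact (C ∩ {α : WeakDual ℝ V | α x ≤ m}) := by
    intro m
    apply (alaoglu_general hW (M + m)).of_isClosed_subset
    · exact hcl.inter (isClosed_le (WeakDual.eval_continuous x) continuous_const)
    · rintro α ⟨hαC, hαx⟩ w ⟨hw1, hw2⟩
      have e1 : -M ≤ α (x + w) := hM _ hw1 α hαC
      have e2 : -M ≤ α (x + -w) := hM _ hw2 α hαC
      have e3 : α (x + w) = α x + α w := map_add α x w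
      have e4 : α (x + -w) = α x - α w := by rw [map_add]; simp [sub_eq_add_neg]
      rw [abs_le]
      simp only [Set.mem_setOf_eq] at hαx
      constructor <;> linarith
  -- local compactness
  have hwlc : WeaklyLocallyCompactSpace C := by
    constructor
    rintro ⟨α₀, hα₀⟩
    refine ⟨((↑) : C → WeakDual ℝ V) ⁻¹' {β : WeakDual ℝ V | β x ≤ α₀ x + 1}, ?_, ?_⟩
    · rw [Topology.IsEmbedding.subtypeVal.isCompact_iff]
      rw [Subtype.image_preimage_coe]
      exact hsub _
    · apply continuous_subtype_val.continuousAt.preimage_mem_nhds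
      have hop : {β : WeakDual ℝ V | β x < α₀ x + 1} ∈ nhds α₀ := by
        apply IsOpen.mem_nhds
        · exact isOpen_lt (WeakDual.eval_continuous x) continuous_const
        · simp
      exact Filter.mem_of_superset hop fun β hβ => show β x ≤ α₀ x + 1 from le_of_lt hβ
  haveI : LocallyConvexSpace ℝ (WeakDual ℝ V) :=
    WeakBilin.locallyConvexSpace (B := topDualPairing ℝ V)
  refine ⟨inferInstance, ?_⟩
  -- the minimum is attained
  obtain ⟨β₀, hβ₀⟩ := hne
  have hKcpt : IsCompact (C ∩ {α : WeakDual ℝ V | α x ≤ β₀ x}) := hsub (β₀ x)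
  have hKne : (C ∩ {α : WeakDual ℝ V | α x ≤ β₀ x}).Nonempty := ⟨β₀, hβ₀, show β₀ x ≤ β₀ x from le_rfl⟩
  obtain ⟨α₁, hα₁, hmin⟩ := hKcpt.exists_isMinOn hKne
    ((WeakDual.eval_continuous x).continuousOn)
  have hglobal : ∀ β ∈ C, α₁ x ≤ β x := by
    intro β hβ
    rcases le_or_gt (β x) (β₀ x) with h | h
    · exact hmin ⟨hβ, h⟩
    · exact le_trans (hmin ⟨hβ₀, show β₀ x ≤ β₀ x from le_rfl⟩) h.le
  -- the exposed face of minimizers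
  set e : WeakDual ℝ V →L[ℝ] ℝ :=
    { toFun := fun α => α x
      map_add' := fun a b => rfl
      map_smul' := fun c a => rfl
      cont := WeakDual.eval_continuous x }
  have he : ∀ α : WeakDual ℝ V, e α = α x := fun _ => rfl
  set l : WeakDual ℝ V →L[ℝ] ℝ := -e with hl
  have hlval : ∀ α : WeakDual ℝ V, l α = -(α x) := fun _ => rfl
  set F : Set (WeakDual ℝ V) := {β ∈ C | ∀ γ ∈ C, l γ ≤ l β} with hF
  have hexp : IsExposed ℝ C F := fun _ => ⟨l, rfl⟩
  have hα₁F : α₁ ∈ F := by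
    refine ⟨hα₁.1, fun γ hγ => ?_⟩
    rw [hlval, hlval]
    exact neg_le_neg (hglobal γ hγ)
  have hFsub : F ⊆ C ∩ {α : WeakDual ℝ V | α x ≤ β₀ x} := by
    rintro β ⟨hβC, hβm⟩
    refine ⟨hβC, ?_⟩
    have := hβm β₀ hβ₀
    rw [hlval, hlval] at this
    simpa using neg_le_neg_iff.mp this
  have hFcl : IsClosed F := hexp.isClosed hcl
  have hFcpt : IsCompact F := hKcpt.of_isClosed_subset hFcl hFsub
  obtain ⟨α, hαF⟩ := hFcpt.extremePoints_nonempty ⟨α₁, hα₁F⟩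
  refine ⟨α, hexp.isExtreme.extremePoints_subset_extremePoints hαF, ?_⟩
  intro β hβ
  have hβα : l β ≤ l α := hαF.1.2 β hβ
  rw [hlval, hlval] at hβα
  exact neg_le_neg_iff.mp hβα
end

section
/- Let $\mathcal{A}$ be a unital C*-algebra and $\tau \in \mathcal{A}$ with $\tau = \tau^*$ and $\tau^2 = 1$. Write $a < b$ if $b - a = c^* c$ for some invertible $c \in \mathcal{A}$. Then $S := \{s \in \mathcal{A} : s^* \tau s < \tau\}$ is a subsemigroup of $(\mathcal{A}, \cdot)$: if $s, t \in S$ then $st \in S$. -/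
/-- Let `τ` be a self-adjoint involution in a unital C*-algebra, and write
`a < b` iff `b - a = c*c` for some invertible `c`. Then
`S = {s | s*τs < τ}` is closed under multiplication. -/
theorem stmt_15 {A : Type*} [NormedRing A] [StarRing A] [CStarRing A]
    [CompleteSpace A] [NormedAlgebra ℂ A] [StarModule ℂ A]
    (τ : A) (hτstar : star τ = τ) (hτsq : τ * τ = 1)
    (s t : A)
    (hs : ∃ c : A, IsUnit c ∧ τ - star s * τ * s = star c * c)
    (ht : ∃ c : A, IsUnit c ∧ τ - star t * τ * t = star c * c) :
    ∃ c : A, IsUnit c ∧ τ - star (s * t) * τ * (s * t) = star c * c := by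
  letI : CStarAlgebra A := ⟨⟩
  letI := CStarAlgebra.spectralOrder A
  letI := CStarAlgebra.spectralOrderedRing A
  obtain ⟨c, hcU, hc⟩ := hs
  obtain ⟨d, hdU, hd⟩ := ht
  set x : A := τ - star (s * t) * τ * (s * t) with hx
  have key : x = star d * d + star (c * t) * (c * t) := by
    have : x = (τ - star t * τ * t) + star t * (τ - star s * τ * s) * t := by
      rw [hx, star_mul]; noncomm_ring
    rw [this, hc, hd, star_mul]; noncomm_ring
  have hdd : (0 : A) ≤ star d * d := star_mul_self_nonneg d
  have hle : star d * d ≤ x := by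
    rw [key]
    exact le_add_of_nonneg_right (star_mul_self_nonneg _)
  have hxU : IsUnit x :=
    CStarAlgebra.isUnit_of_le _ hle (IsStrictlyPositive.iff_of_unital.mpr ⟨hdd, hdU.star.mul hdU⟩)
  have hxnn : (0 : A) ≤ x := hdd.trans hle
  have hsq : CFC.sqrt x * CFC.sqrt x = x := CFC.sqrt_mul_sqrt_self x hxnn
  have hsa : IsSelfAdjoint (CFC.sqrt x) := (CFC.sqrt_nonneg (a := x)).isSelfAdjoint
  refine ⟨CFC.sqrt x, ?_, ?_⟩
  · obtain ⟨u, hu⟩ := hxU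
    have h1 : CFC.sqrt x * (CFC.sqrt x * ↑u⁻¹) = 1 := by
      rw [← mul_assoc, hsq, ← hu, u.mul_inv]
    have h2 : (↑u⁻¹ * CFC.sqrt x) * CFC.sqrt x = 1 := by
      rw [mul_assoc, hsq, ← hu, u.inv_mul]
    have heq : (↑u⁻¹ * CFC.sqrt x : A) = CFC.sqrt x * ↑u⁻¹ :=
      left_inv_eq_right_inv h2 h1
    exact ⟨⟨CFC.sqrt x, CFC.sqrt x * ↑u⁻¹, h1,
      by rw [← heq]; exact h2⟩, rfl⟩
  · rw [hsa.star_eq, hsq]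
end
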